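/- For every natural number n ≥ 2: n(n−1)·∫₀¹ (1−t)^(n−2) · |(n+1)·t − 1| dt = 2(n+1)·(1 − 1/(n+1))^n − 1. -/

import Mathlib

theorem stmt_16 (n : ℕ) (hn : 2 ≤ n) :
    (n : ℝ) * ((n : ℝ) - 1) *
        ∫ t in (0:ℝ)..1, (1 - t) ^ (n - 2) * |((n : ℝ) + 1) * t - 1| =
      2 * ((n : ℝ) + 1) * (1 - 1 / ((n : ℝ) + 1)) ^ n - 1 := by
  obtain ⟨m, rfl⟩ := Nat.exists_eq_add_of_le hn
  have hcast : ((2 + m : ℕ) : ℝ) = (m : ℝ) + 2 := by push_cast; ring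
  have hsub : (2 + m) - 2 = m := by omega
  rw [hcast, hsub]
  set M : ℝ := (m : ℝ) with hMdef
  have hM : 0 ≤ M := Nat.cast_nonneg m
  have h3 : (0:ℝ) < M + 3 := by linarith
  set c : ℝ := 1 / (M + 3) with hc
  have hc0 : 0 ≤ c := by positivity
  have hc1 : c ≤ 1 := by rw [hc, div_le_one h3]; linarith
  set F : ℝ → ℝ := fun t => (M+3)*(M+1)*(1-t)^(m+2) - (M+2)^2*(1-t)^(m+1) with hF
  set g : ℝ → ℝ := fun t => (M+2)*(M+1)*((1-t)^m*((M+3)*t-1)) with hg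
  have hderiv : ∀ t : ℝ, HasDerivAt F (g t) t := by
    intro t
    have h1 : HasDerivAt (fun t : ℝ => 1 - t) (-1) t := by
      simpa using (hasDerivAt_id t).const_sub 1
    have h2 := (h1.fun_pow (m+2)).const_mul ((M+3)*(M+1))
    have h3' := (h1.fun_pow (m+1)).const_mul ((M+2)^2)
    have hs := h2.fun_sub h3'
    refine hs.congr_deriv ?_
    simp only [Nat.add_sub_cancel, hg]
    push_cast
    ring
  have hgint : ∀ a b : ℝ, IntervalIntegrable g MeasureTheory.volume a b := by
    intro a b
    apply Continuous.intervalIntegrable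
    rw [hg]; fun_prop
  have key : ∀ a b : ℝ, (∫ t in a..b, g t) = F b - F a := fun a b =>
    intervalIntegral.integral_eq_sub_of_hasDerivAt (fun t _ => hderiv t) (hgint a b)
  rw [← intervalIntegral.integral_const_mul]
  have hcont : Continuous fun t : ℝ => (M+2)*((M+2)-1) * ((1-t)^m * |(M+2+1)*t-1|) := by
    fun_prop
  have split : (∫ t in (0:ℝ)..1, (M+2)*((M+2)-1) * ((1-t)^m * |(M+2+1)*t-1|))
      = (∫ t in (0:ℝ)..c, (M+2)*((M+2)-1) * ((1-t)^m * |(M+2+1)*t-1|))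
      + ∫ t in c..1, (M+2)*((M+2)-1) * ((1-t)^m * |(M+2+1)*t-1|) := by
    rw [intervalIntegral.integral_add_adjacent_intervals] <;>
      exact hcont.intervalIntegrable _ _
  have e1 : (∫ t in (0:ℝ)..c, (M+2)*((M+2)-1) * ((1-t)^m * |(M+2+1)*t-1|))
      = ∫ t in (0:ℝ)..c, -g t := by
    apply intervalIntegral.integral_congr
    intro t ht
    rw [Set.uIcc_of_le hc0] at ht
    have h1 : (M+2+1)*t - 1 ≤ 0 := by
      have : (M+3) * t ≤ (M+3) * c := by
        apply mul_le_mul_of_nonneg_left ht.2 (le_of_lt h3)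
      rw [hc] at this
      rw [mul_one_div, div_self (ne_of_gt h3)] at this
      linarith
    simp only [hg]
    rw [abs_of_nonpos h1]
    ring
  have e2 : (∫ t in c..(1:ℝ), (M+2)*((M+2)-1) * ((1-t)^m * |(M+2+1)*t-1|))
      = ∫ t in c..(1:ℝ), g t := by
    apply intervalIntegral.integral_congr
    intro t ht
    rw [Set.uIcc_of_le hc1] at ht
    have h1 : 0 ≤ (M+2+1)*t - 1 := by
      have : (M+3) * c ≤ (M+3) * t := by
        apply mul_le_mul_of_nonneg_left ht.1 (le_of_lt h3)
      rw [hc, mul_one_div, div_self (ne_of_gt h3)] at this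
      linarith
    simp only [hg]
    rw [abs_of_nonneg h1]
    ring
  rw [split, e1, e2, intervalIntegral.integral_neg, key, key]
  simp only [hF]
  have h1c : (M+3)*(1-c) = M+2 := by
    rw [hc]; field_simp; ring
  have hpow : (1-c)^(2+m) = (1-c)^(m+1)*(1-c) := by
    rw [Nat.add_comm, pow_succ]
  have hr : (1:ℝ) - 1/(M+2+1) = 1 - c := by rw [hc]; ring
  have z1 : (0:ℝ)^(m+2) = 0 := zero_pow (by omega)
  have z2 : (0:ℝ)^(m+1) = 0 := zero_pow (by omega)
  have hp2 : (1-c)^(m+2) = (1-c)^(m+1)*(1-c) := pow_succ _ _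
  rw [hr, hpow, hp2, show (1:ℝ)-1 = 0 by norm_num, show (1:ℝ)-0 = 1 by norm_num, z1, z2, one_pow, one_pow]
  linear_combination ((-2*(M+1) - 2) * (1-c)^(m+1)) * h1c
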